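/- Let x, y ∈ ℝ^d, let μ be a probability distribution on ℝ^d with real characteristic function k(x−y) = E_{a∼μ}[cos(⟨a, x−y⟩)], and let l be a positive integer. Define v̂(x) ∈ ℝ^l by v̂(x)_j = √(2/l)·cos(⟨a_j, x⟩ + b_j) with a_j ∼ μ and b_j ∼ Unif[0,2π] independent across j. Then for any ε̂ > 0, Pr[|⟨v̂(x), v̂(y)⟩ − k(x−y)| ≥ ε̂] ≤ 2 e^{−l ε̂² / 8}. -/

import Mathlib

open MeasureTheory

open Real
open MeasureTheory ProbabilityTheory

open Real

lemma mono_aid {f f' : ℝ → ℝ} (hf : ∀ v, HasDerivAt f (f' v) v)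
    (h0 : ∀ v, 0 ≤ v → 0 ≤ f' v) {u : ℝ} (hu : 0 ≤ u) : f 0 ≤ f u := by
  have hmono : MonotoneOn f (Set.Ici 0) := by
    apply monotoneOn_of_deriv_nonneg (convex_Ici 0)
    · exact Continuous.continuousOn (continuous_iff_continuousAt.mpr fun v => (hf v).continuousAt)
    · intro v hv
      exact ((hf v).differentiableAt.differentiableWithinAt)
    · intro v hv
      rw [(hf v).deriv]
      exact h0 v (le_of_lt (by simpa using hv))
  exact hmono Set.self_mem_Ici hu hu

-- L1
lemma L1 {u : ℝ} (hu : 0 ≤ u) : cosh u - 1 ≤ u * sinh u := by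
  have := mono_aid (f := fun v : ℝ => v * sinh v - (cosh v - 1))
    (f' := fun v : ℝ => v * cosh v)
    (fun v => by
      have h1 : HasDerivAt (fun v : ℝ => v * sinh v) (1 * sinh v + v * cosh v) v :=
        (hasDerivAt_id v).mul (Real.hasDerivAt_sinh v)
      have h2 : HasDerivAt (fun v : ℝ => cosh v - 1) (sinh v) v :=
        (Real.hasDerivAt_cosh v).sub_const 1
      exact (h1.sub h2).congr_deriv (by ring))
    (fun v hv => by positivity) hu
  simp only [Real.sinh_zero, Real.cosh_zero] at this
  linarith

-- L2
lemma L2 {u : ℝ} (hu : 0 ≤ u) : sinh u ≤ u * (1 + cosh u) / 2 := by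
  have := mono_aid (f := fun v : ℝ => v * (1 + cosh v) / 2 - sinh v)
    (f' := fun v : ℝ => (v * sinh v - (cosh v - 1)) / 2)
    (fun v => by
      have h1 : HasDerivAt (fun v : ℝ => v * (1 + cosh v) / 2)
          ((1 * (1 + cosh v) + v * sinh v) / 2) v := by
        have := ((hasDerivAt_id v).mul ((Real.hasDerivAt_cosh v).const_add 1)).div_const 2
        simpa using this
      have h2 := Real.hasDerivAt_cosh v
      have := h1.sub (Real.hasDerivAt_sinh v)
      exact this.congr_deriv (by ring)
    )
    (fun v hv => by have := L1 hv; linarith) hu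
  simp only [Real.sinh_zero, Real.cosh_zero] at this
  linarith

-- L3
lemma L3 {m u : ℝ} (hm1 : -1 ≤ m) (hm2 : m ≤ 1) (hu : 0 ≤ u) :
    (1 - m ^ 2) * sinh u ≤ u * (cosh u + m * sinh u) := by
  have h2 := L2 hu
  have step1 : (1 - m ^ 2) * sinh u ≤ (1 - m ^ 2) * (u * (1 + cosh u) / 2) := by
    apply mul_le_mul_of_nonneg_left h2
    nlinarith
  refine step1.trans ?_
  rw [Real.cosh_eq, Real.sinh_eq]
  have he : exp (u / 2) * exp (u / 2) = exp u := by rw [← exp_add]; ring_nf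
  have he2 : exp (u / 2) * exp (-(u / 2)) = 1 := by rw [← exp_add]; simp
  have he3 : exp (-(u / 2)) * exp (-(u / 2)) = exp (-u) := by rw [← exp_add]; ring_nf
  have key : u * ((exp u + exp (-u)) / 2 + m * ((exp u - exp (-u)) / 2)) -
      (1 - m ^ 2) * (u * (1 + (exp u + exp (-u)) / 2) / 2) =
      (u / 4) * ((1 + m) * exp (u / 2) - (1 - m) * exp (-(u / 2))) ^ 2 := by
    have hx : exp u = exp (u / 2) * exp (u / 2) := he.symm
    have hy : exp (-u) = exp (-(u / 2)) * exp (-(u / 2)) := he3.symm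
    rw [hx, hy]
    linear_combination (u / 2) * (1 - m ^ 2) * he2
  nlinarith [mul_nonneg (by positivity : (0:ℝ) ≤ u / 4)
    (sq_nonneg ((1 + m) * exp (u / 2) - (1 - m) * exp (-(u / 2)))), key]

lemma Dpos {m : ℝ} (hm1 : -1 ≤ m) (hm2 : m ≤ 1) (u : ℝ) : 0 < cosh u + m * sinh u := by
  have h1 : Real.sinh u ^ 2 + 1 = Real.cosh u ^ 2 := (Real.cosh_sq u).symm
  have h2 := Real.cosh_pos (x := u)
  have habs : |Real.sinh u| < Real.cosh u := by
    nlinarith [sq_abs (Real.sinh u), abs_nonneg (Real.sinh u)]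
  have h3 : -|Real.sinh u| ≤ m * Real.sinh u := by
    rcases abs_cases (Real.sinh u) with ⟨hc1, hc2⟩ | ⟨hc1, hc2⟩ <;> nlinarith
  linarith

lemma L4' {m : ℝ} (hm1 : -1 ≤ m) (hm2 : m ≤ 1) {u : ℝ} (hu : 0 ≤ u) :
    cosh u + m * sinh u ≤ exp (m * u + u ^ 2 / 2) := by
  have hD : ∀ v : ℝ, 0 < cosh v + m * sinh v := Dpos hm1 hm2
  have hder : ∀ v : ℝ, HasDerivAt
      (fun v : ℝ => m * v + v ^ 2 / 2 - Real.log (cosh v + m * sinh v))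
      (m + v - (sinh v + m * cosh v) / (cosh v + m * sinh v)) v := by
    intro v
    have h1 : HasDerivAt (fun v : ℝ => m * v + v ^ 2 / 2) (m + v) v := by
      have := ((hasDerivAt_id v).const_mul m).add
        (((hasDerivAt_id v).pow 2).div_const 2)
      exact this.congr_deriv (by simp)
    have hDv : HasDerivAt (fun v : ℝ => cosh v + m * sinh v)
        (sinh v + m * cosh v) v :=
      (Real.hasDerivAt_cosh v).add ((Real.hasDerivAt_sinh v).const_mul m)
    exact h1.sub (hDv.log (hD v).ne')
  have hkey := mono_aid hder (fun v hv => by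
    have hL3 := L3 hm1 hm2 hv
    have hdiv : (sinh v + m * cosh v) / (cosh v + m * sinh v) ≤ m + v := by
      rw [div_le_iff₀ (hD v)]
      nlinarith
    linarith) hu
  simp only [Real.sinh_zero, Real.cosh_zero, mul_zero, add_zero, mul_one, zero_add] at hkey
  norm_num at hkey
  have hlog : Real.log (cosh u + m * sinh u) ≤ m * u + u ^ 2 / 2 := by linarith
  calc cosh u + m * sinh u = exp (Real.log (cosh u + m * sinh u)) :=
        (Real.exp_log (hD u)).symm
    _ ≤ exp (m * u + u ^ 2 / 2) := Real.exp_le_exp.mpr hlog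

lemma L4 {m : ℝ} (hm1 : -1 ≤ m) (hm2 : m ≤ 1) (u : ℝ) :
    cosh u + m * sinh u ≤ exp (m * u + u ^ 2 / 2) := by
  rcases le_total 0 u with hu | hu
  · exact L4' hm1 hm2 hu
  · have := L4' (m := -m) (by linarith) (by linarith) (u := -u) (by linarith)
    simp only [Real.cosh_neg, Real.sinh_neg] at this
    calc cosh u + m * sinh u = cosh u + -m * -sinh u := by ring
      _ ≤ exp (-m * -u + (-u) ^ 2 / 2) := this
      _ = exp (m * u + u ^ 2 / 2) := by ring_nf

open MeasureTheory in
lemma L0 {z : ℝ} (hz1 : -1 ≤ z) (hz2 : z ≤ 1) (lam : ℝ) :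
    exp (lam * z) ≤ cosh lam + z * sinh lam := by
  have h := convexOn_exp.2 (Set.mem_univ lam) (Set.mem_univ (-lam))
    (show (0:ℝ) ≤ (1 + z) / 2 by linarith) (show (0:ℝ) ≤ (1 - z) / 2 by linarith)
    (show (1 + z) / 2 + (1 - z) / 2 = 1 by ring)
  simp only [smul_eq_mul] at h
  rw [Real.cosh_eq, Real.sinh_eq]
  calc exp (lam * z) = exp ((1 + z) / 2 * lam + (1 - z) / 2 * -lam) := by ring_nf
    _ ≤ (1 + z) / 2 * exp lam + (1 - z) / 2 * exp (-lam) := h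
    _ = (exp lam + exp (-lam)) / 2 + z * ((exp lam - exp (-lam)) / 2) := by ring

open MeasureTheory ProbabilityTheory in
lemma hoeffding_mgf {Ω : Type*} [MeasurableSpace Ω] (ν : Measure Ω) [IsProbabilityMeasure ν]
    (X : Ω → ℝ) (hX : Measurable X) {c r : ℝ} (hr : 0 < r)
    (hb : ∀ ω, |X ω - c| ≤ r) (hmean : ∫ ω, X ω ∂ν = 0) (t : ℝ) :
    mgf X ν t ≤ exp (t ^ 2 * r ^ 2 / 2) := by
  have hIntX : Integrable X ν := by
    refine Integrable.mono' (integrable_const (|c| + r)) hX.aestronglyMeasurable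
      (ae_of_all _ fun ω => ?_)
    rw [Real.norm_eq_abs]
    calc |X ω| = |(X ω - c) + c| := by ring_nf
      _ ≤ |X ω - c| + |c| := abs_add_le _ _
      _ ≤ |c| + r := by have := hb ω; linarith
  have hc : |c| ≤ r := by
    have h1 : (∫ _ : Ω, (c - r) ∂ν) ≤ ∫ ω, X ω ∂ν :=
      integral_mono (integrable_const _) hIntX fun ω => by
        have := abs_le.mp (hb ω); linarith [this.1]
    have h2 : (∫ ω, X ω ∂ν) ≤ ∫ _ : Ω, (c + r) ∂ν :=
      integral_mono hIntX (integrable_const _) fun ω => by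
        have := abs_le.mp (hb ω); linarith [this.2]
    simp [hmean, measure_univ] at h1 h2
    rw [abs_le]; constructor <;> linarith
  set ch := cosh (t * r) with hch
  set sh := sinh (t * r) with hsh
  have hpt : ∀ ω, exp (t * X ω) ≤
      exp (t * c) * (ch - c / r * sh) + (exp (t * c) * sh / r) * X ω := by
    intro ω
    have hz1 : -1 ≤ (X ω - c) / r := by
      rw [le_div_iff₀ hr]; have := abs_le.mp (hb ω); linarith [this.1]
    have hz2 : (X ω - c) / r ≤ 1 := by
      rw [div_le_iff₀ hr]; have := abs_le.mp (hb ω); linarith [this.2]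
    have h0 := L0 hz1 hz2 (t * r)
    have hXeq : t * X ω = t * c + (t * r) * ((X ω - c) / r) := by
      field_simp
      ring
    rw [hXeq, Real.exp_add]
    calc exp (t * c) * exp (t * r * ((X ω - c) / r))
        ≤ exp (t * c) * (ch + (X ω - c) / r * sh) := by
          apply mul_le_mul_of_nonneg_left h0 (Real.exp_pos _).le
      _ = exp (t * c) * (ch - c / r * sh) + (exp (t * c) * sh / r) * X ω := by
          field_simp; ring
  have hmgf : mgf X ν t ≤ exp (t * c) * (ch - c / r * sh) := by
    have hIntRHS : Integrable
        (fun ω => exp (t * c) * (ch - c / r * sh) + (exp (t * c) * sh / r) * X ω) ν :=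
      (integrable_const _).add (hIntX.const_mul _)
    have hIntexp : Integrable (fun ω => exp (t * X ω)) ν := by
      refine Integrable.mono' hIntRHS
        ((hX.const_mul t).exp.aestronglyMeasurable) (ae_of_all _ fun ω => ?_)
      rw [Real.norm_eq_abs, abs_of_pos (Real.exp_pos _)]
      exact hpt ω
    calc mgf X ν t = ∫ ω, exp (t * X ω) ∂ν := rfl
      _ ≤ ∫ ω, (exp (t * c) * (ch - c / r * sh) + (exp (t * c) * sh / r) * X ω) ∂ν :=
          integral_mono hIntexp hIntRHS hpt
      _ = exp (t * c) * (ch - c / r * sh) + (exp (t * c) * sh / r) * ∫ ω, X ω ∂ν := by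
          rw [integral_add (integrable_const _) (hIntX.const_mul _),
            integral_const, integral_const_mul]
          simp [measure_univ]
      _ = exp (t * c) * (ch - c / r * sh) := by rw [hmean]; ring
  have hm1 : -1 ≤ -c / r := by
    rw [le_div_iff₀ hr]; have := abs_le.mp hc; linarith [this.2]
  have hm2 : -c / r ≤ 1 := by
    rw [div_le_iff₀ hr]; have := abs_le.mp hc; linarith [this.1]
  have h4 := L4 hm1 hm2 (t * r)
  have : ch - c / r * sh = ch + (-c / r) * sh := by ring
  rw [this] at hmgf
  calc mgf X ν t ≤ exp (t * c) * (ch + (-c / r) * sh) := hmgf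
    _ ≤ exp (t * c) * exp ((-c / r) * (t * r) + (t * r) ^ 2 / 2) := by
        apply mul_le_mul_of_nonneg_left h4 (Real.exp_pos _).le
    _ = exp (t ^ 2 * r ^ 2 / 2) := by
        rw [← Real.exp_add]
        congr 1
        field_simp
        ring

open MeasureTheory ProbabilityTheory

lemma map_eval_pi' {ι : Type*} [Fintype ι] {α : ι → Type*} [∀ i, MeasurableSpace (α i)]
    (P : ∀ i, Measure (α i)) [∀ i, IsProbabilityMeasure (P i)] (j : ι) :
    (Measure.pi P).map (fun ω => ω j) = P j := by
  classical
  ext s hs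
  rw [Measure.map_apply (measurable_pi_apply j) hs]
  have hpre : (fun ω : ∀ i, α i => ω j) ⁻¹' s
      = Set.pi Set.univ (Function.update (fun i => (Set.univ : Set (α i))) j s) := by
    ext ω
    simp only [Set.mem_preimage, Set.mem_pi, Set.mem_univ, true_implies]
    constructor
    · intro h i
      rcases eq_or_ne i j with rfl | hij
      · simpa using h
      · simp [Function.update_of_ne hij]
    · intro h
      have := h j
      simpa using this
  rw [hpre, Measure.pi_pi]
  rw [Finset.prod_eq_single j (fun i _ hij => by simp [Function.update_of_ne hij, measure_univ])
    (fun h => absurd (Finset.mem_univ j) h)]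
  simp

lemma iIndepFun_eval_pi {ι : Type*} [Fintype ι] {α : ι → Type*} [∀ i, MeasurableSpace (α i)]
    (P : ∀ i, Measure (α i)) [∀ i, IsProbabilityMeasure (P i)] :
    iIndepFun (fun (i : ι) (ω : ∀ i, α i) => ω i) (Measure.pi P) := by
  classical
  rw [iIndepFun_iff_measure_inter_preimage_eq_mul]
  intro S sets hS
  have heq : (⋂ i ∈ S, (fun ω : ∀ i, α i => ω i) ⁻¹' sets i)
      = Set.pi Set.univ (fun i => if i ∈ S then sets i else Set.univ) := by
    ext ω
    simp only [Set.mem_iInter, Set.mem_preimage, Set.mem_pi, Set.mem_univ, true_implies]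
    constructor
    · intro h i
      by_cases hi : i ∈ S <;> simp [hi, h i]
    · intro h i hi
      have := h i
      simpa [hi] using this
  rw [heq, Measure.pi_pi]
  have heval : ∀ i ∈ S, Measure.pi P ((fun ω : ∀ i, α i => ω i) ⁻¹' sets i) = P i (sets i) := by
    intro i hi
    rw [← Measure.map_apply (measurable_pi_apply i) (hS i hi), map_eval_pi']
  rw [Finset.prod_congr rfl heval]
  calc (∏ i : ι, (P i) (if i ∈ S then sets i else Set.univ))
      = ∏ i : ι, (if i ∈ S then (P i) (sets i) else 1) := by
        refine Finset.prod_congr rfl fun i _ => ?_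
        by_cases hi : i ∈ S <;> simp [hi, measure_univ]
    _ = ∏ i ∈ S, (P i) (sets i) := by
        rw [Finset.prod_ite_mem]
        simp

lemma unif_cos_zero (unif : Measure ℝ)
    (hunif : unif =
      (ENNReal.ofReal (2 * Real.pi))⁻¹ • volume.restrict (Set.Icc 0 (2 * Real.pi)))
    (θ : ℝ) : ∫ b, Real.cos (θ + 2 * b) ∂unif = 0 := by
  rw [hunif, integral_smul_measure]
  have h0 : (∫ b in Set.Icc (0:ℝ) (2 * Real.pi), Real.cos (θ + 2 * b)) = 0 := by
    rw [integral_Icc_eq_integral_Ioc,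
      ← intervalIntegral.integral_of_le Real.two_pi_pos.le]
    have : (∫ b in (0:ℝ)..(2 * Real.pi), Real.cos (θ + 2 * b))
        = ∫ b in (0:ℝ)..(2 * Real.pi), Real.cos (2 * b + θ) := by
      simp_rw [add_comm]
    rw [this, intervalIntegral.integral_comp_mul_add Real.cos two_ne_zero θ]
    rw [integral_cos]
    have : 2 * (2 * Real.pi) + θ = θ + 2 * Real.pi + 2 * Real.pi := by ring
    rw [this, Real.sin_add_two_pi, Real.sin_add_two_pi]
    simp [mul_comm]
  rw [h0]
  simp

lemma mean_Y (d : ℕ) (x y : Fin d → ℝ)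
    (μ : Measure (Fin d → ℝ)) [IsProbabilityMeasure μ]
    (unif : Measure ℝ) [IsProbabilityMeasure unif]
    (hunif : unif =
      (ENNReal.ofReal (2 * Real.pi))⁻¹ • volume.restrict (Set.Icc 0 (2 * Real.pi)))
    (k : ℝ) (hk : k = ∫ a, Real.cos (∑ i, a i * (x i - y i)) ∂μ) :
    ∫ p : (Fin d → ℝ) × ℝ,
      (2 * Real.cos ((∑ i, p.1 i * x i) + p.2) * Real.cos ((∑ i, p.1 i * y i) + p.2) - k)
      ∂(μ.prod unif) = 0 := by
  have hA : Measurable fun a : Fin d → ℝ => ∑ i, a i * x i :=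
    Finset.measurable_sum _ fun i _ => (measurable_pi_apply i).mul_const _
  have hB : Measurable fun a : Fin d → ℝ => ∑ i, a i * y i :=
    Finset.measurable_sum _ fun i _ => (measurable_pi_apply i).mul_const _
  have hmeas : Measurable fun p : (Fin d → ℝ) × ℝ =>
      2 * Real.cos ((∑ i, p.1 i * x i) + p.2) * Real.cos ((∑ i, p.1 i * y i) + p.2) - k := by
    refine Measurable.sub ?_ measurable_const
    exact (((hA.comp measurable_fst).add measurable_snd).cos.const_mul 2).mul
      ((hB.comp measurable_fst).add measurable_snd).cos
  have hint : Integrable (fun p : (Fin d → ℝ) × ℝ =>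
      2 * Real.cos ((∑ i, p.1 i * x i) + p.2) * Real.cos ((∑ i, p.1 i * y i) + p.2) - k)
      (μ.prod unif) := by
    refine Integrable.mono' (integrable_const (2 + |k|)) hmeas.aestronglyMeasurable
      (ae_of_all _ fun p => ?_)
    rw [Real.norm_eq_abs]
    have h1 := Real.abs_cos_le_one ((∑ i, p.1 i * x i) + p.2)
    have h2 := Real.abs_cos_le_one ((∑ i, p.1 i * y i) + p.2)
    calc |2 * Real.cos _ * Real.cos _ - k| ≤ |2 * Real.cos _ * Real.cos _| + |k| := abs_sub _ _
      _ ≤ 2 + |k| := by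
        refine add_le_add ?_ le_rfl
        rw [abs_mul, abs_mul, abs_two]
        nlinarith [abs_nonneg (Real.cos ((∑ i, p.1 i * x i) + p.2)),
          abs_nonneg (Real.cos ((∑ i, p.1 i * y i) + p.2))]
  rw [integral_prod _ hint]
  have hinner : ∀ a : Fin d → ℝ,
      (∫ b, (2 * Real.cos ((∑ i, a i * x i) + b) * Real.cos ((∑ i, a i * y i) + b) - k) ∂unif)
      = Real.cos ((∑ i, a i * x i) - (∑ i, a i * y i)) - k := by
    intro a
    set A := ∑ i, a i * x i
    set B := ∑ i, a i * y i
    have htrig : ∀ b : ℝ, 2 * Real.cos (A + b) * Real.cos (B + b) - k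
        = Real.cos ((A + B) + 2 * b) + (Real.cos (A - B) - k) := by
      intro b
      have e1 : Real.cos ((A + B) + 2 * b) = Real.cos ((A + b) + (B + b)) := by ring_nf
      have e2 : Real.cos (A - B) = Real.cos ((A + b) - (B + b)) := by ring_nf
      linear_combination -(e1 + e2 + Real.cos_add (A + b) (B + b)
        + Real.cos_sub (A + b) (B + b))
    simp_rw [htrig]
    have hint1 : Integrable (fun b => Real.cos ((A + B) + 2 * b)) unif := by
      refine Integrable.mono' (integrable_const 1)
        ((measurable_const.add (measurable_id.const_mul 2)).cos.aestronglyMeasurable)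
        (ae_of_all _ fun b => ?_)
      rw [Real.norm_eq_abs]
      exact Real.abs_cos_le_one _
    rw [integral_add hint1 (integrable_const _), unif_cos_zero unif hunif, integral_const]
    simp
  simp_rw [hinner]
  have hAB : ∀ a : Fin d → ℝ, (∑ i, a i * x i) - (∑ i, a i * y i) = ∑ i, a i * (x i - y i) := by
    intro a
    rw [← Finset.sum_sub_distrib]
    congr 1
    ext i
    ring
  simp_rw [hAB]
  have hintc : Integrable (fun a => Real.cos (∑ i, a i * (x i - y i))) μ := by
    refine Integrable.mono' (integrable_const 1)
      ((Finset.measurable_sum _ fun i _ => (measurable_pi_apply i).mul_const _).cos.aestronglyMeasurable)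
      (ae_of_all _ fun a => by rw [Real.norm_eq_abs]; exact Real.abs_cos_le_one _)
  rw [integral_sub hintc (integrable_const _), integral_const]
  simp [hk]


/-- Hoeffding bound for the approximate feature map of Rahimi–Recht: with
`v̂(x)_j = √(2/l)·cos(⟨a_j,x⟩+b_j)` for i.i.d. `a_j ∼ μ`, `b_j ∼ Unif[0,2π]`, and
`k = E_{a∼μ}[cos(⟨a,x-y⟩)]`, one has
`Pr[|⟨v̂(x),v̂(y)⟩ - k| ≥ ε̂] ≤ 2·e^{-lε̂²/8}`. -/
theorem feature_map_hoeffding (d l : ℕ) (hl : 0 < l) (x y : Fin d → ℝ)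
    (μ : Measure (Fin d → ℝ)) [IsProbabilityMeasure μ]
    (unif : Measure ℝ) [IsProbabilityMeasure unif]
    (hunif : unif =
      (ENNReal.ofReal (2 * Real.pi))⁻¹ • volume.restrict (Set.Icc 0 (2 * Real.pi)))
    (k : ℝ) (hk : k = ∫ a, Real.cos (∑ i, a i * (x i - y i)) ∂μ)
    (ε : ℝ) (hε : 0 < ε) :
    (Measure.pi fun _ : Fin l => μ.prod unif)
        {ω : Fin l → (Fin d → ℝ) × ℝ |
          ε ≤ |(∑ j, (Real.sqrt (2 / l) * Real.cos ((∑ i, (ω j).1 i * x i) + (ω j).2)) *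
                (Real.sqrt (2 / l) * Real.cos ((∑ i, (ω j).1 i * y i) + (ω j).2))) - k|}
      ≤ ENNReal.ofReal (2 * Real.exp (-(l : ℝ) * ε ^ 2 / 8)) := by
  classical
  have hlR : (0 : ℝ) < l := by exact_mod_cast hl
  set ν : Measure ((Fin d → ℝ) × ℝ) := μ.prod unif with hν
  set P : Measure (Fin l → (Fin d → ℝ) × ℝ) := Measure.pi fun _ : Fin l => ν with hPdef
  set Y : (Fin d → ℝ) × ℝ → ℝ := fun p =>
    2 * Real.cos ((∑ i, p.1 i * x i) + p.2) * Real.cos ((∑ i, p.1 i * y i) + p.2) - k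
    with hYdef
  have hA : Measurable fun a : Fin d → ℝ => ∑ i, a i * x i :=
    Finset.measurable_sum _ fun i _ => (measurable_pi_apply i).mul_const _
  have hB : Measurable fun a : Fin d → ℝ => ∑ i, a i * y i :=
    Finset.measurable_sum _ fun i _ => (measurable_pi_apply i).mul_const _
  have hYmeas : Measurable Y := by
    refine Measurable.sub ?_ measurable_const
    exact (((hA.comp measurable_fst).add measurable_snd).cos.const_mul 2).mul
      ((hB.comp measurable_fst).add measurable_snd).cos
  have hYb : ∀ p, |Y p - (-k)| ≤ 2 := by
    intro p
    have h1 := Real.abs_cos_le_one ((∑ i, p.1 i * x i) + p.2)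
    have h2 := Real.abs_cos_le_one ((∑ i, p.1 i * y i) + p.2)
    have : Y p - (-k) = 2 * Real.cos ((∑ i, p.1 i * x i) + p.2) *
        Real.cos ((∑ i, p.1 i * y i) + p.2) := by simp [hYdef]
    rw [this, abs_mul, abs_mul, abs_two]
    nlinarith [abs_nonneg (Real.cos ((∑ i, p.1 i * x i) + p.2)),
      abs_nonneg (Real.cos ((∑ i, p.1 i * y i) + p.2))]
  have hYabs : ∀ p, |Y p| ≤ 2 + |k| := by
    intro p
    calc |Y p| = |(Y p - (-k)) + (-k)| := by ring_nf
      _ ≤ |Y p - (-k)| + |(-k)| := abs_add_le _ _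
      _ ≤ 2 + |k| := by have := hYb p; rw [abs_neg]; linarith
  have hYmean : ∫ p, Y p ∂ν = 0 := mean_Y d x y μ unif hunif k hk
  have hmgfY : ∀ t : ℝ, mgf Y ν t ≤ Real.exp (2 * t ^ 2) := by
    intro t
    have := hoeffding_mgf ν Y hYmeas (c := -k) (r := 2) (by norm_num) hYb hYmean t
    calc mgf Y ν t ≤ Real.exp (t ^ 2 * 2 ^ 2 / 2) := this
      _ = Real.exp (2 * t ^ 2) := by norm_num; ring_nf
  set Xf : Fin l → (Fin l → (Fin d → ℝ) × ℝ) → ℝ := fun j ω => Y (ω j) with hXf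
  have hXmeas : ∀ j, Measurable (Xf j) := fun j => hYmeas.comp (measurable_pi_apply j)
  have hindep : iIndepFun Xf P := by
    have := (iIndepFun_eval_pi (fun _ : Fin l => ν)).comp (fun _ => Y) (fun _ => hYmeas)
    exact this
  have hmgfX : ∀ (j : Fin l) (t : ℝ), mgf (Xf j) P t = mgf Y ν t := by
    intro j t
    show (∫ ω, Real.exp (t * Y (ω j)) ∂P) = ∫ p, Real.exp (t * Y p) ∂ν
    have hmap : P.map (fun ω => ω j) = ν := map_eval_pi' (fun _ : Fin l => ν) j
    rw [← hmap, integral_map (measurable_pi_apply j).aemeasurable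
      ((hYmeas.const_mul t).exp.aestronglyMeasurable)]
  have hintexp : ∀ (j : Fin l) (t : ℝ),
      Integrable (fun ω => Real.exp (t * Xf j ω)) P := by
    intro j t
    refine Integrable.mono' (integrable_const (Real.exp (|t| * (2 + |k|))))
      (((hXmeas j).const_mul t).exp.aestronglyMeasurable) (ae_of_all _ fun ω => ?_)
    rw [Real.norm_eq_abs, abs_of_pos (Real.exp_pos _), Real.exp_le_exp]
    calc t * Xf j ω ≤ |t * Xf j ω| := le_abs_self _
      _ = |t| * |Xf j ω| := abs_mul _ _
      _ ≤ |t| * (2 + |k|) := by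
          apply mul_le_mul_of_nonneg_left (hYabs _) (abs_nonneg _)
  -- mgf of the sum
  have hmgfS : ∀ t : ℝ, mgf (∑ j, Xf j) P t ≤ Real.exp ((l : ℝ) * (2 * t ^ 2)) := by
    intro t
    rw [iIndepFun.mgf_sum hindep hXmeas]
    calc (∏ j : Fin l, mgf (Xf j) P t) ≤ ∏ _j : Fin l, Real.exp (2 * t ^ 2) := by
          refine Finset.prod_le_prod (fun j _ => mgf_nonneg) (fun j _ => ?_)
          rw [hmgfX]
          exact hmgfY t
      _ = Real.exp (2 * t ^ 2) ^ (l : ℕ) := by simp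
      _ = Real.exp ((l : ℝ) * (2 * t ^ 2)) := by rw [← Real.exp_nat_mul]
  have hSint : ∀ t : ℝ, Integrable (fun ω => Real.exp (t * (∑ j, Xf j) ω)) P :=
    fun t => iIndepFun.integrable_exp_mul_sum hindep hXmeas (fun j _ => hintexp j t)
  set t0 : ℝ := ε / 4 with ht0
  have ht0pos : 0 < t0 := by positivity
  have hbound : Real.exp (-t0 * ((l : ℝ) * ε)) * Real.exp ((l : ℝ) * (2 * t0 ^ 2))
      = Real.exp (-(l : ℝ) * ε ^ 2 / 8) := by
    rw [← Real.exp_add]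
    congr 1
    rw [ht0]
    ring
  have upper : (P {ω | (l : ℝ) * ε ≤ (∑ j, Xf j) ω}).toReal
      ≤ Real.exp (-(l : ℝ) * ε ^ 2 / 8) := by
    calc (P {ω | (l : ℝ) * ε ≤ (∑ j, Xf j) ω}).toReal
        ≤ Real.exp (-t0 * ((l : ℝ) * ε)) * mgf (∑ j, Xf j) P t0 :=
          measure_ge_le_exp_mul_mgf _ ht0pos.le (hSint t0)
      _ ≤ Real.exp (-t0 * ((l : ℝ) * ε)) * Real.exp ((l : ℝ) * (2 * t0 ^ 2)) := by
          apply mul_le_mul_of_nonneg_left (hmgfS t0) (Real.exp_pos _).le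
      _ = Real.exp (-(l : ℝ) * ε ^ 2 / 8) := hbound
  have lower : (P {ω | (∑ j, Xf j) ω ≤ -((l : ℝ) * ε)}).toReal
      ≤ Real.exp (-(l : ℝ) * ε ^ 2 / 8) := by
    calc (P {ω | (∑ j, Xf j) ω ≤ -((l : ℝ) * ε)}).toReal
        ≤ Real.exp (-(-t0) * (-((l : ℝ) * ε))) * mgf (∑ j, Xf j) P (-t0) :=
          measure_le_le_exp_mul_mgf _ (by linarith) (hSint (-t0))
      _ ≤ Real.exp (-(-t0) * (-((l : ℝ) * ε))) * Real.exp ((l : ℝ) * (2 * (-t0) ^ 2)) := by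
          apply mul_le_mul_of_nonneg_left (hmgfS (-t0)) (Real.exp_pos _).le
      _ = Real.exp (-(l : ℝ) * ε ^ 2 / 8) := by
          rw [← hbound, ← Real.exp_add, ← Real.exp_add]
          congr 1
          ring
  -- event inclusion
  have hsub : {ω : Fin l → (Fin d → ℝ) × ℝ |
        ε ≤ |(∑ j, (Real.sqrt (2 / l) * Real.cos ((∑ i, (ω j).1 i * x i) + (ω j).2)) *
              (Real.sqrt (2 / l) * Real.cos ((∑ i, (ω j).1 i * y i) + (ω j).2))) - k|}
      ⊆ {ω | (l : ℝ) * ε ≤ (∑ j, Xf j) ω} ∪ {ω | (∑ j, Xf j) ω ≤ -((l : ℝ) * ε)} := by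
    intro ω hω
    simp only [Set.mem_setOf_eq] at hω
    have hsq : ∀ c1 c2 : ℝ, (Real.sqrt (2 / l) * c1) * (Real.sqrt (2 / l) * c2)
        = (2 / l) * (c1 * c2) := by
      intro c1 c2
      have : Real.sqrt (2 / l) * Real.sqrt (2 / l) = 2 / l :=
        Real.mul_self_sqrt (by positivity)
      calc (Real.sqrt (2 / l) * c1) * (Real.sqrt (2 / l) * c2)
          = (Real.sqrt (2 / l) * Real.sqrt (2 / l)) * (c1 * c2) := by ring
        _ = (2 / l) * (c1 * c2) := by rw [this]
    have hSsum : (∑ j, Xf j) ω = ∑ j : Fin l,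
        (2 * Real.cos ((∑ i, (ω j).1 i * x i) + (ω j).2) *
          Real.cos ((∑ i, (ω j).1 i * y i) + (ω j).2) - k) := by
      simp [hXf, hYdef]
    have hrel : (∑ j, (Real.sqrt (2 / l) * Real.cos ((∑ i, (ω j).1 i * x i) + (ω j).2)) *
          (Real.sqrt (2 / l) * Real.cos ((∑ i, (ω j).1 i * y i) + (ω j).2))) - k
        = (1 / l) * (∑ j, Xf j) ω := by
      have h1 : (∑ j, (Real.sqrt (2 / l) * Real.cos ((∑ i, (ω j).1 i * x i) + (ω j).2)) *
            (Real.sqrt (2 / l) * Real.cos ((∑ i, (ω j).1 i * y i) + (ω j).2)))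
          = (1 / l) * ∑ j : Fin l, 2 * Real.cos ((∑ i, (ω j).1 i * x i) + (ω j).2) *
            Real.cos ((∑ i, (ω j).1 i * y i) + (ω j).2) := by
        rw [Finset.mul_sum]
        refine Finset.sum_congr rfl fun j _ => ?_
        rw [hsq]
        field_simp
      rw [hSsum, Finset.sum_sub_distrib, h1, Finset.sum_const, Finset.card_univ,
        Fintype.card_fin, nsmul_eq_mul]
      field_simp
    rw [hrel, abs_mul, abs_of_pos (by positivity : (0:ℝ) < 1 / l)] at hω
    have hlε : (l : ℝ) * ε ≤ |(∑ j, Xf j) ω| := by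
      calc (l:ℝ) * ε ≤ (l:ℝ) * ((1 / l) * |(∑ j, Xf j) ω|) := by
            apply mul_le_mul_of_nonneg_left hω hlR.le
        _ = |(∑ j, Xf j) ω| := by field_simp
    rcases abs_cases ((∑ j, Xf j) ω) with ⟨heq, _⟩ | ⟨heq, _⟩
    · left; rw [Set.mem_setOf_eq]; linarith [heq ▸ hlε]
    · right; rw [Set.mem_setOf_eq]; linarith [heq ▸ hlε]
  refine le_trans (measure_mono hsub) ((measure_union_le _ _).trans ?_)
  have e1 : P {ω | (l : ℝ) * ε ≤ (∑ j, Xf j) ω}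
      ≤ ENNReal.ofReal (Real.exp (-(l : ℝ) * ε ^ 2 / 8)) := by
    rw [← ENNReal.ofReal_toReal (measure_ne_top P _)]
    exact ENNReal.ofReal_le_ofReal upper
  have e2 : P {ω | (∑ j, Xf j) ω ≤ -((l : ℝ) * ε)}
      ≤ ENNReal.ofReal (Real.exp (-(l : ℝ) * ε ^ 2 / 8)) := by
    rw [← ENNReal.ofReal_toReal (measure_ne_top P _)]
    exact ENNReal.ofReal_le_ofReal lower
  calc P {ω | (l : ℝ) * ε ≤ (∑ j, Xf j) ω} + P {ω | (∑ j, Xf j) ω ≤ -((l : ℝ) * ε)}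
      ≤ ENNReal.ofReal (Real.exp (-(l : ℝ) * ε ^ 2 / 8))
        + ENNReal.ofReal (Real.exp (-(l : ℝ) * ε ^ 2 / 8)) := add_le_add e1 e2
    _ = ENNReal.ofReal (2 * Real.exp (-(l : ℝ) * ε ^ 2 / 8)) := by
        rw [← ENNReal.ofReal_add (Real.exp_pos _).le (Real.exp_pos _).le]
        congr 1
        ring
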